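/- Stochasticity of the Δ-weights: For every x ∈ ℂ with 1 − s·x ≠ 0, every vector I ∈ ℕ^{2n}, and every color j ∈ {0} ∪ [±n], the sum over ℓ ∈ {0} ∪ [±n] such that K := I + e_j − e_ℓ has all entries nonnegative of M_x(I, j, K, ℓ) equals 1. -/

import Mathlib

open scoped BigOperators

/-- The set of colors `{0} ∪ [±n]`, encoded as `Fin (2*n+1)`:
index `i < n` is the positive color `i+1`, index `n` is the color `0`,
and index `k > n` is the negative color `\overline{2*n+1-k}`.
The order on `Fin (2*n+1)` is exactly the color order
`1 < ⋯ < n < 0 < n̄ < ⋯ < 1̄`. -/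
abbrev Col (n : ℕ) := Fin (2*n+1)

/-- The color `0` (identified with the `+` spin). -/
def mid (n : ℕ) : Col n := ⟨n, by omega⟩

/-- The bar involution `i ↦ ī` on colors (fixing `0`). -/
def barC (n : ℕ) (c : Col n) : Col n := ⟨2*n - c.val, by omega⟩

/-- The positive color `i+1` attached to `i : Fin n`. -/
def posC (n : ℕ) (i : Fin n) : Col n := ⟨i.val, by have := i.isLt; omega⟩

/-- Vectors `I ∈ ℕ^{2n}` indexed by the colors `[±n]` (the entry at the
color `0` is irrelevant/always `0`). -/
abbrev Vec (n : ℕ) := Col n → ℕ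

/-- `e_j`: the standard basis vector for `j ∈ [±n]`, and `e_0 = 0`. -/
def eV (n : ℕ) (c : Col n) : Vec n := fun k => if c ≠ mid n ∧ k = c then 1 else 0

/-- `I_{[1,n]}`. -/
def sLo (n : ℕ) (I : Vec n) : ℕ := ∑ k ∈ Finset.univ.filter (fun k : Col n => k < mid n), I k
/-- `I_{[n̄,1̄]}`. -/
def sHi (n : ℕ) (I : Vec n) : ℕ := ∑ k ∈ Finset.univ.filter (fun k : Col n => mid n < k), I k
/-- `I_{≤ l}`. -/
def sLe (n : ℕ) (I : Vec n) (l : Col n) : ℕ := ∑ k ∈ Finset.univ.filter (fun k : Col n => k ≤ l), I k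
/-- `I_{< l}`. -/
def sLt (n : ℕ) (I : Vec n) (l : Col n) : ℕ := ∑ k ∈ Finset.univ.filter (fun k : Col n => k < l), I k
/-- `I_{> l}`. -/
def sGt (n : ℕ) (I : Vec n) (l : Col n) : ℕ := ∑ k ∈ Finset.univ.filter (fun k : Col n => l < k), I k
/-- `I_{≥ l}`. -/
def sGe (n : ℕ) (I : Vec n) (l : Col n) : ℕ := ∑ k ∈ Finset.univ.filter (fun k : Col n => l ≤ k), I k

/-- The Boltzmann weight `M_x(I, j, K, ℓ)` of a Δ vertex (Table 2.2). -/
noncomputable def MW (n : ℕ) (q s x : ℂ) (I : Vec n) (j : Col n) (K : Vec n) (l : Col n) : ℂ :=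
  if ∀ k, I k + eV n j k = K k + eV n l k then
    if j = l then
      if l = mid n then (q ^ (-(sHi n I : ℤ)) - s * x * q ^ (sLo n I : ℤ)) / (1 - s * x)
      else if l < mid n then s * (s * q ^ (I l : ℤ) - x) * q ^ (sLt n I l : ℤ) / (1 - s * x)
      else (1 - s⁻¹ * x * q ^ (-(I l : ℤ))) * q ^ (-(sGt n I l : ℤ)) / (1 - s * x)
    else if j < l then
      if l = mid n then (q ^ (-(sHi n I : ℤ)) - s ^ 2 * q ^ (sLo n I : ℤ)) / (1 - s * x)
      else if l < mid n then -(s ^ 2) * (1 - q ^ (I l : ℤ)) * q ^ (sLt n I l : ℤ) / (1 - s * x)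
      else -(1 - q ^ (I l : ℤ)) * q ^ (-(sGe n I l : ℤ)) / (1 - s * x)
    else
      if l = mid n then x * (s⁻¹ * q ^ (-(sHi n I : ℤ)) - s * q ^ (sLo n I : ℤ)) / (1 - s * x)
      else if l < mid n then -(s * x) * (1 - q ^ (I l : ℤ)) * q ^ (sLt n I l : ℤ) / (1 - s * x)
      else -(s⁻¹ * x) * (1 - q ^ (I l : ℤ)) * q ^ (-(sGe n I l : ℤ)) / (1 - s * x)
  else 0


namespace DeltaAux
open Finset

def Ie (n : ℕ) (I : Vec n) (i : ℕ) : ℕ := if h : i < 2*n+1 then I ⟨i, h⟩ else 0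

def T (n : ℕ) (I : Vec n) (c : ℕ) : ℕ := ∑ i ∈ Finset.range c, Ie n I i

lemma T_succ (n : ℕ) (I : Vec n) (c : ℕ) : T n I (c+1) = T n I c + Ie n I c :=
  Finset.sum_range_succ _ _

lemma Ie_val (n : ℕ) (I : Vec n) (l : Col n) : Ie n I l.val = I l := by
  simp [Ie, l.isLt]

lemma conv (n : ℕ) (I : Vec n) (v : ℕ) (hv : v ≤ 2*n+1) :
    ∑ k ∈ univ.filter (fun k : Col n => k.val < v), I k = T n I v := by
  rw [Finset.sum_filter]
  have h1 : ∀ k : Col n, (if k.val < v then I k else 0)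
      = (fun i => if i < v then Ie n I i else 0) k.val := by
    intro k; simp [Ie_val]
  rw [Finset.sum_congr rfl (fun k _ => h1 k),
    Fin.sum_univ_eq_sum_range (fun i => if i < v then Ie n I i else 0) (2*n+1),
    ← Finset.sum_filter]
  have h2 : (Finset.range (2*n+1)).filter (fun i => i < v) = Finset.range v := by
    ext i; simp [Finset.mem_filter, Finset.mem_range]; omega
  rw [h2]; rfl

lemma sLt_eq (n : ℕ) (I : Vec n) (l : Col n) : sLt n I l = T n I l.val := by
  rw [sLt, ← conv n I l.val (by omega)]
  apply Finset.sum_congr _ (fun _ _ => rfl)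
  apply Finset.filter_congr
  intro k _; exact Iff.rfl

lemma sLe_eq (n : ℕ) (I : Vec n) (l : Col n) : sLe n I l = T n I (l.val+1) := by
  rw [sLe, ← conv n I (l.val+1) (by omega)]
  apply Finset.sum_congr _ (fun _ _ => rfl)
  apply Finset.filter_congr
  intro k _; exact Nat.lt_succ_iff.symm

lemma sLo_eq (n : ℕ) (I : Vec n) : sLo n I = T n I n := by
  rw [sLo, ← conv n I n (by omega)]; rfl

lemma total_eq (n : ℕ) (I : Vec n) : ∑ k, I k = T n I (2*n+1) := by
  rw [← conv n I (2*n+1) (le_refl _)]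
  apply Finset.sum_congr _ (fun _ _ => rfl)
  symm; apply Finset.filter_true_of_mem
  intro k _; exact k.isLt

lemma sGe_eq (n : ℕ) (I : Vec n) (l : Col n) :
    (sGe n I l : ℤ) = (T n I (2*n+1) : ℤ) - T n I l.val := by
  have h := Finset.sum_filter_add_sum_filter_not Finset.univ (fun k : Col n => k < l) I
  have h2 : Finset.univ.filter (fun k : Col n => ¬ k < l)
      = Finset.univ.filter (fun k : Col n => l ≤ k) := by
    apply Finset.filter_congr; intro k _; simp [not_lt]
  rw [h2] at h
  have h3 : sLt n I l + sGe n I l = T n I (2*n+1) := by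
    rw [sLt, sGe, h, total_eq]
  rw [sLt_eq] at h3; omega

lemma sGt_eq (n : ℕ) (I : Vec n) (l : Col n) :
    (sGt n I l : ℤ) = (T n I (2*n+1) : ℤ) - T n I (l.val+1) := by
  have h := Finset.sum_filter_add_sum_filter_not Finset.univ (fun k : Col n => k ≤ l) I
  have h2 : Finset.univ.filter (fun k : Col n => ¬ k ≤ l)
      = Finset.univ.filter (fun k : Col n => l < k) := by
    apply Finset.filter_congr; intro k _; simp [not_le]
  rw [h2] at h
  have h3 : sLe n I l + sGt n I l = T n I (2*n+1) := by
    rw [sLe, sGt, h, total_eq]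
  rw [sLe_eq] at h3; omega

lemma sHi_eq (n : ℕ) (I : Vec n) :
    (sHi n I : ℤ) = (T n I (2*n+1) : ℤ) - T n I (n+1) := by
  have := sGt_eq n I (mid n)
  rw [sGt, mid] at this
  exact this

end DeltaAux


lemma tele (f : ℕ → ℂ) {a b : ℕ} (h : a ≤ b) :
    ∑ v ∈ Finset.Ico a b, (f v - f (v+1)) = f a - f b := by
  induction b, h using Nat.le_induction with
  | base => simp
  | succ b hb ih => rw [Finset.sum_Ico_succ_top (by omega), ih]; ring

lemma teleC (f : ℕ → ℂ) (c : ℂ) {a b : ℕ} (h : a ≤ b) :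
    ∑ v ∈ Finset.Ico a b, c * (f v - f (v+1)) = c * (f a - f b) := by
  rw [← Finset.mul_sum, tele f h]

noncomputable def Pf (m : ℕ) (s x : ℂ) (f g : ℕ → ℂ) (J v : ℕ) : ℂ :=
  if J = v then
    if v = m then (g (m+1) - s*x*f m)/(1-s*x)
    else if v < m then (s^2 * f (v+1) - s*x*f v)/(1-s*x)
    else (g (v+1) - s⁻¹*x*g v)/(1-s*x)
  else if J < v then
    if v = m then (g (m+1) - s^2 * f m)/(1-s*x)
    else if v < m then (-(s^2) * (f v - f (v+1)))/(1-s*x)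
    else (-(g v - g (v+1)))/(1-s*x)
  else
    if v = m then (x*s⁻¹*g (m+1) - x*s*f m)/(1-s*x)
    else if v < m then (-(s*x) * (f v - f (v+1)))/(1-s*x)
    else (-(s⁻¹*x) * (g v - g (v+1)))/(1-s*x)

lemma sumP (m J : ℕ) (s x : ℂ) (f g : ℕ → ℂ) (hsx : 1 - s*x ≠ 0)
    (hf : f 0 = 1) (hg : g (2*m+1) = 1) (hJ : J < 2*m+1) :
    ∑ v ∈ Finset.range (2*m+1), Pf m s x f g J v = 1 := by
  have single : ∀ (F : ℕ → ℂ) (a : ℕ), ∑ v ∈ Finset.Ico a (a+1), F v = F a := by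
    intro F a
    rw [Finset.sum_Ico_succ_top le_rfl, Finset.Ico_self, Finset.sum_empty, zero_add]
  rw [Finset.range_eq_Ico]
  rcases lt_trichotomy J m with h | h | h
  · -- J < m
    rw [← Finset.sum_Ico_consecutive _ (show 0 ≤ J by omega) (show J ≤ 2*m+1 by omega),
        ← Finset.sum_Ico_consecutive _ (show J ≤ J+1 by omega) (show J+1 ≤ 2*m+1 by omega),
        ← Finset.sum_Ico_consecutive _ (show J+1 ≤ m by omega) (show m ≤ 2*m+1 by omega),
        ← Finset.sum_Ico_consecutive _ (show m ≤ m+1 by omega) (show m+1 ≤ 2*m+1 by omega)]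
    have p1 : ∑ v ∈ Finset.Ico 0 J, Pf m s x f g J v
        = (-(s*x)/(1-s*x)) * (f 0 - f J) := by
      rw [Finset.sum_congr rfl (fun v hv => ?_), teleC f _ (by omega)]
      rw [Finset.mem_Ico] at hv
      rw [Pf, if_neg (by omega), if_neg (by omega), if_neg (by omega), if_pos (by omega)]
      ring
    have p2 : ∑ v ∈ Finset.Ico J (J+1), Pf m s x f g J v
        = (s^2 * f (J+1) - s*x*f J)/(1-s*x) := by
      rw [single, Pf, if_pos rfl, if_neg (by omega), if_pos h]
    have p3 : ∑ v ∈ Finset.Ico (J+1) m, Pf m s x f g J v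
        = (-(s^2)/(1-s*x)) * (f (J+1) - f m) := by
      rw [Finset.sum_congr rfl (fun v hv => ?_), teleC f _ (by omega)]
      rw [Finset.mem_Ico] at hv
      rw [Pf, if_neg (by omega), if_pos (by omega), if_neg (by omega), if_pos (by omega)]
      ring
    have p4 : ∑ v ∈ Finset.Ico m (m+1), Pf m s x f g J v
        = (g (m+1) - s^2 * f m)/(1-s*x) := by
      rw [single, Pf, if_neg (by omega), if_pos (by omega), if_pos rfl]
    have p5 : ∑ v ∈ Finset.Ico (m+1) (2*m+1), Pf m s x f g J v
        = (-1/(1-s*x)) * (g (m+1) - g (2*m+1)) := by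
      rw [Finset.sum_congr rfl (fun v hv => ?_), teleC g _ (by omega)]
      rw [Finset.mem_Ico] at hv
      rw [Pf, if_neg (by omega), if_pos (by omega), if_neg (by omega), if_neg (by omega)]
      ring
    rw [p1, p2, p3, p4, p5, hf, hg]
    simp only [div_mul_eq_mul_div, ← add_div]
    rw [div_eq_one_iff_eq hsx]
    ring
  · -- J = m
    subst h
    rw [← Finset.sum_Ico_consecutive _ (show 0 ≤ J by omega) (show J ≤ 2*J+1 by omega),
        ← Finset.sum_Ico_consecutive _ (show J ≤ J+1 by omega) (show J+1 ≤ 2*J+1 by omega)]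
    have p1 : ∑ v ∈ Finset.Ico 0 J, Pf J s x f g J v
        = (-(s*x)/(1-s*x)) * (f 0 - f J) := by
      rw [Finset.sum_congr rfl (fun v hv => ?_), teleC f _ (by omega)]
      rw [Finset.mem_Ico] at hv
      rw [Pf, if_neg (by omega), if_neg (by omega), if_neg (by omega), if_pos (by omega)]
      ring
    have p2 : ∑ v ∈ Finset.Ico J (J+1), Pf J s x f g J v
        = (g (J+1) - s*x*f J)/(1-s*x) := by
      rw [single, Pf, if_pos rfl, if_pos rfl]
    have p5 : ∑ v ∈ Finset.Ico (J+1) (2*J+1), Pf J s x f g J v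
        = (-1/(1-s*x)) * (g (J+1) - g (2*J+1)) := by
      rw [Finset.sum_congr rfl (fun v hv => ?_), teleC g _ (by omega)]
      rw [Finset.mem_Ico] at hv
      rw [Pf, if_neg (by omega), if_pos (by omega), if_neg (by omega), if_neg (by omega)]
      ring
    rw [p1, p2, p5, hf, hg]
    simp only [div_mul_eq_mul_div, ← add_div]
    rw [div_eq_one_iff_eq hsx]
    ring
  · -- J > m
    rw [← Finset.sum_Ico_consecutive _ (show 0 ≤ m by omega) (show m ≤ 2*m+1 by omega),
        ← Finset.sum_Ico_consecutive _ (show m ≤ m+1 by omega) (show m+1 ≤ 2*m+1 by omega),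
        ← Finset.sum_Ico_consecutive _ (show m+1 ≤ J by omega) (show J ≤ 2*m+1 by omega),
        ← Finset.sum_Ico_consecutive _ (show J ≤ J+1 by omega) (show J+1 ≤ 2*m+1 by omega)]
    have p1 : ∑ v ∈ Finset.Ico 0 m, Pf m s x f g J v
        = (-(s*x)/(1-s*x)) * (f 0 - f m) := by
      rw [Finset.sum_congr rfl (fun v hv => ?_), teleC f _ (by omega)]
      rw [Finset.mem_Ico] at hv
      rw [Pf, if_neg (by omega), if_neg (by omega), if_neg (by omega), if_pos (by omega)]
      ring
    have p2 : ∑ v ∈ Finset.Ico m (m+1), Pf m s x f g J v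
        = (x*s⁻¹*g (m+1) - x*s*f m)/(1-s*x) := by
      rw [single, Pf, if_neg (by omega), if_neg (by omega), if_pos rfl]
    have p3 : ∑ v ∈ Finset.Ico (m+1) J, Pf m s x f g J v
        = (-(s⁻¹*x)/(1-s*x)) * (g (m+1) - g J) := by
      rw [Finset.sum_congr rfl (fun v hv => ?_), teleC g _ (by omega)]
      rw [Finset.mem_Ico] at hv
      rw [Pf, if_neg (by omega), if_neg (by omega), if_neg (by omega), if_neg (by omega)]
      ring
    have p4 : ∑ v ∈ Finset.Ico J (J+1), Pf m s x f g J v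
        = (g (J+1) - s⁻¹*x*g J)/(1-s*x) := by
      rw [single, Pf, if_pos rfl, if_neg (by omega), if_neg (by omega)]
    have p5 : ∑ v ∈ Finset.Ico (J+1) (2*m+1), Pf m s x f g J v
        = (-1/(1-s*x)) * (g (J+1) - g (2*m+1)) := by
      rw [Finset.sum_congr rfl (fun v hv => ?_), teleC g _ (by omega)]
      rw [Finset.mem_Ico] at hv
      rw [Pf, if_neg (by omega), if_pos (by omega), if_neg (by omega), if_neg (by omega)]
      ring
    rw [p1, p2, p3, p4, p5, hf, hg]
    simp only [div_mul_eq_mul_div, ← add_div]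
    rw [div_eq_one_iff_eq hsx]
    ring


open DeltaAux in
lemma MW_eq_Pf (n : ℕ) (q s x : ℂ) (hq : q ≠ 0) (I : Vec n) (j l : Col n) :
    MW n q s x I j (fun k => I k + eV n j k - eV n l k) l
      = Pf n s x (fun c => q ^ (T n I c : ℤ))
          (fun c => q ^ ((T n I c : ℤ) - (T n I (2*n+1) : ℤ))) j.val l.val := by
  have hT1 : (T n I (l.val+1) : ℤ) = (T n I l.val : ℤ) + (I l : ℤ) := by
    rw [T_succ, Ie_val]; push_cast; ring
  have hGe := sGe_eq n I l
  have hGt := sGt_eq n I l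
  have hHi := sHi_eq n I
  have h1 : (j = l) ↔ (j.val = l.val) := Fin.val_inj.symm
  have h2 : (l = mid n) ↔ (l.val = n) := by
    constructor
    · intro h; rw [h]; rfl
    · intro h; exact Fin.ext h
  have h3 : (l < mid n) ↔ (l.val < n) := Iff.rfl
  have h4 : (j < l) ↔ (j.val < l.val) := Iff.rfl
  by_cases hfil : ∀ k, eV n l k ≤ I k + eV n j k
  · have hcons : ∀ k, I k + eV n j k = (I k + eV n j k - eV n l k) + eV n l k :=
      fun k => by have := hfil k; omega
    rw [MW, if_pos hcons]
    simp only [Pf, h1, h2, h3, h4]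
    split_ifs with c1 c2 c3 c4 c5 c6 c7 c8
    · -- diag mid
      rw [sLo_eq, show (-(sHi n I : ℤ)) = (T n I (n+1) : ℤ) - (T n I (2*n+1) : ℤ) from by omega]
    · -- diag pos
      rw [sLt_eq, hT1, zpow_add₀ hq]; ring
    · -- diag neg
      rw [show (-(sGt n I l : ℤ)) = (T n I (l.val+1) : ℤ) - (T n I (2*n+1) : ℤ) from by omega,
        show ((T n I l.val : ℤ) - (T n I (2*n+1) : ℤ))
            = (-(I l : ℤ)) + ((T n I (l.val+1) : ℤ) - (T n I (2*n+1) : ℤ)) from by omega,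
        zpow_add₀ hq]
      ring
    · -- j<l mid
      rw [sLo_eq, show (-(sHi n I : ℤ)) = (T n I (n+1) : ℤ) - (T n I (2*n+1) : ℤ) from by omega]
    · -- j<l pos
      rw [sLt_eq, hT1, zpow_add₀ hq]; ring
    · -- j<l neg
      rw [show (-(sGe n I l : ℤ)) = (T n I l.val : ℤ) - (T n I (2*n+1) : ℤ) from by omega,
        show ((T n I (l.val+1) : ℤ) - (T n I (2*n+1) : ℤ))
            = ((I l : ℤ)) + ((T n I l.val : ℤ) - (T n I (2*n+1) : ℤ)) from by omega,
        zpow_add₀ hq]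
      ring
    · -- j>l mid
      rw [sLo_eq, show (-(sHi n I : ℤ)) = (T n I (n+1) : ℤ) - (T n I (2*n+1) : ℤ) from by omega]
      ring
    · -- j>l pos
      rw [sLt_eq, hT1, zpow_add₀ hq]; ring
    · -- j>l neg
      rw [show (-(sGe n I l : ℤ)) = (T n I l.val : ℤ) - (T n I (2*n+1) : ℤ) from by omega,
        show ((T n I (l.val+1) : ℤ) - (T n I (2*n+1) : ℤ))
            = ((I l : ℤ)) + ((T n I l.val : ℤ) - (T n I (2*n+1) : ℤ)) from by omega,
        zpow_add₀ hq]
      ring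
  · push_neg at hfil
    obtain ⟨k, hk⟩ := hfil
    have hle : eV n l k ≤ 1 := by simp only [eV]; split <;> omega
    have h1k : eV n l k = 1 := by omega
    have h0k : I k + eV n j k = 0 := by omega
    have hkl : k = l ∧ l ≠ mid n := by
      by_contra hcon
      have : eV n l k = 0 := by
        simp only [eV, ite_eq_right_iff]
        intro ⟨ha, hb⟩; exact absurd ⟨hb, ha⟩ hcon
      omega
    obtain ⟨hkeq, hlm⟩ := hkl
    rw [hkeq] at h1k h0k
    have hI0 : I l = 0 := by omega
    have hjl : j ≠ l := by
      intro h
      have he1 : eV n j l = 1 := by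
        simp only [eV]
        rw [if_pos ⟨by rw [h]; exact hlm, h.symm⟩]
      omega
    have hTT : T n I (l.val+1) = T n I l.val := by
      rw [T_succ, Ie_val, hI0]; omega
    rw [MW, if_neg (by
      intro hcons
      have hc := hcons l
      omega)]
    have hvn : l.val ≠ n := fun h => hlm (h2.mpr h)
    have hJv : j.val ≠ l.val := fun h => hjl (Fin.val_inj.mp h)
    rw [Pf, if_neg hJv]
    rcases lt_or_gt_of_ne hJv with hlt | hgt
    · rw [if_pos hlt, if_neg hvn]
      by_cases hv : l.val < n
      · rw [if_pos hv, hTT]; simp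
      · rw [if_neg hv, hTT]; simp
    · rw [if_neg (by omega), if_neg hvn]
      by_cases hv : l.val < n
      · rw [if_pos hv, hTT]; simp
      · rw [if_neg hv, hTT]; simp


/-- stochasticity of the Δ-weights: for every `x` with
`1 - s·x ≠ 0`, every `I ∈ ℕ^{2n}` and every color `j`, the sum of
`M_x(I, j, K, ℓ)` over all colors `ℓ` such that `K := I + e_j - e_ℓ` has
nonnegative entries equals `1`. -/
theorem delta_weights_stochastic (n : ℕ) (hn : 0 < n) (q s x : ℂ)
    (hq : q ≠ 0) (hs : s ≠ 0) (hsx : 1 - s * x ≠ 0)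
    (I : Vec n) (j : Col n) :
    ∑ l ∈ Finset.univ.filter (fun l : Col n => ∀ k, eV n l k ≤ I k + eV n j k),
      MW n q s x I j (fun k => I k + eV n j k - eV n l k) l = 1 := by
  classical
  have hzero : ∀ l ∈ Finset.univ, l ∉ Finset.univ.filter
      (fun l : Col n => ∀ k, eV n l k ≤ I k + eV n j k) →
      MW n q s x I j (fun k => I k + eV n j k - eV n l k) l = 0 := by
    intro l _ hl
    rw [Finset.mem_filter] at hl
    push_neg at hl
    obtain ⟨k, hk⟩ := hl (Finset.mem_univ l)
    have hle : eV n l k ≤ 1 := by simp only [eV]; split <;> omega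
    rw [MW, if_neg]
    intro hcons
    have hc := hcons k
    omega
  rw [Finset.sum_subset (Finset.filter_subset _ _) hzero]
  rw [Finset.sum_congr rfl (fun l _ => MW_eq_Pf n q s x hq I j l)]
  rw [Fin.sum_univ_eq_sum_range (fun v => Pf n s x (fun c => q ^ (DeltaAux.T n I c : ℤ))
      (fun c => q ^ ((DeltaAux.T n I c : ℤ) - (DeltaAux.T n I (2*n+1) : ℤ))) j.val v) (2*n+1)]
  exact sumP n j.val s x _ _ hsx (by simp [DeltaAux.T]) (by simp) j.isLt
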